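/- Let K ⊆ ℝⁿ be a closed star-shaped set (i.e., cK ⊆ K for all 0 ≤ c ≤ 1). Then for any u ∈ K, a ∈ ℝⁿ, and t > 0: ‖P_K(a) − u‖₂ ≤ max(t, (2/t)·‖a − u‖_{K_t°}), where P_K(a) is any Euclidean metric projection of a onto K, K_t = (K−K) ∩ tB₂ⁿ, and ‖x‖_{K_t°} = sup_{v∈K_t}⟨x,v⟩. -/

import Mathlib

open RealInnerProductSpace

/-- The polar seminorm of `x` with respect to `Q_t = (K - K) ∩ t·B₂ⁿ`. -/
noncomputable def polarNorm {n : ℕ} (K : Set (EuclideanSpace ℝ (Fin n))) (t : ℝ)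
    (x : EuclideanSpace ℝ (Fin n)) : ℝ :=
  sSup ((fun v => ⟪x, v⟫) ''
    {v | (∃ k₁ ∈ K, ∃ k₂ ∈ K, v = k₁ - k₂) ∧ ‖v‖ ≤ t})

theorem projection_error_bound {n : ℕ} (K : Set (EuclideanSpace ℝ (Fin n)))
    (hclosed : IsClosed K)
    (hstar : ∀ c : ℝ, 0 ≤ c → c ≤ 1 → ∀ x ∈ K, c • x ∈ K)
    (u : EuclideanSpace ℝ (Fin n)) (hu : u ∈ K)
    (a : EuclideanSpace ℝ (Fin n)) (t : ℝ) (ht : 0 < t)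
    (p : EuclideanSpace ℝ (Fin n)) (hpK : p ∈ K)
    (hproj : ∀ k ∈ K, ‖a - p‖ ≤ ‖a - k‖) :
    ‖p - u‖ ≤ max t (2 / t * polarNorm K t (a - u)) := by
  rcases le_or_gt ‖p - u‖ t with h | h
  · exact le_max_of_le_left h
  set d := ‖p - u‖ with hd
  have hd0 : 0 < d := lt_trans ht h
  -- key inner product inequality
  have h1 : ‖a - p‖ ≤ ‖a - u‖ := hproj u hu
  have hkey : d ^ 2 / 2 ≤ ⟪a - u, p - u⟫ := by
    have hexp : ‖a - p‖ ^ 2 = ‖a - u‖ ^ 2 - 2 * ⟪a - u, p - u⟫ + ‖p - u‖ ^ 2 := by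
      have : a - p = (a - u) - (p - u) := by abel
      rw [this, @norm_sub_sq_real]
    nlinarith [norm_nonneg (a - p), norm_nonneg (a - u), sq_nonneg (‖a - u‖ - ‖a - p‖)]
  -- the test vector
  set c : ℝ := t / d with hc
  have hc0 : 0 ≤ c := le_of_lt (div_pos ht hd0)
  have hc1 : c ≤ 1 := by rw [hc, div_le_one hd0]; exact le_of_lt h
  set v₀ : EuclideanSpace ℝ (Fin n) := c • (p - u) with hv
  have hmem : v₀ ∈ {v : EuclideanSpace ℝ (Fin n) |
      (∃ k₁ ∈ K, ∃ k₂ ∈ K, v = k₁ - k₂) ∧ ‖v‖ ≤ t} := by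
    constructor
    · exact ⟨c • p, hstar c hc0 hc1 p hpK, c • u, hstar c hc0 hc1 u hu, by
        rw [hv, smul_sub]⟩
    · rw [hv, norm_smul, Real.norm_eq_abs, abs_of_nonneg hc0, hc]
      rw [div_mul_eq_mul_div, mul_div_assoc, div_self (ne_of_gt hd0), mul_one]
  have hbdd : BddAbove ((fun v => ⟪a - u, v⟫) ''
      {v : EuclideanSpace ℝ (Fin n) |
        (∃ k₁ ∈ K, ∃ k₂ ∈ K, v = k₁ - k₂) ∧ ‖v‖ ≤ t}) := by
    refine ⟨‖a - u‖ * t, ?_⟩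
    rintro y ⟨v, hvmem, rfl⟩
    calc ⟪a - u, v⟫ ≤ ‖a - u‖ * ‖v‖ := real_inner_le_norm _ _
      _ ≤ ‖a - u‖ * t := by
          exact mul_le_mul_of_nonneg_left hvmem.2 (norm_nonneg _)
  have hle : ⟪a - u, v₀⟫ ≤ polarNorm K t (a - u) :=
    le_csSup hbdd ⟨v₀, hmem, rfl⟩
  have hval : ⟪a - u, v₀⟫ = c * ⟪a - u, p - u⟫ := by
    rw [hv, real_inner_smul_right]
  have hlow : t * d / 2 ≤ polarNorm K t (a - u) := by
    have : t * d / 2 ≤ c * ⟪a - u, p - u⟫ := by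
      have := mul_le_mul_of_nonneg_left hkey hc0
      have hcd : c * (d ^ 2 / 2) = t * d / 2 := by
        field_simp [hc]
        rw [hc, div_mul_cancel₀ t (ne_of_gt hd0)]
      linarith [hcd ▸ this]
    linarith [hval ▸ hle]
  refine le_max_of_le_right ?_
  rw [div_mul_eq_mul_div, le_div_iff₀ ht]
  nlinarith [hlow]
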